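/- For a pure state |ψ⟩ = ∑_i √p_i |i⟩_A ⊗ |i⟩_B with Schmidt coefficients in decreasing order, the Hellinger-distance-based correlation measure C^(D_H)(|ψ⟩⟨ψ|) = inf over density operators δ_A, δ_B of √(2 - 2⟨ψ|√δ_A ⊗ √δ_B|ψ⟩) equals √(2(1 - p₁)). -/

import Mathlib

open Matrix Kronecker ComplexOrder

namespace Stmt7Aux

lemma bessel {N n : ℕ} (e : Fin n → Fin N → ℂ)
    (he : ∀ i j, star (e i) ⬝ᵥ e j = if i = j then 1 else 0)
    (v : Fin N → ℂ) : ∑ i, ‖star (e i) ⬝ᵥ v‖ ^ 2 ≤ ∑ a, ‖v a‖ ^ 2 := by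
  have horth : Orthonormal ℂ (fun i => (WithLp.equiv 2 (Fin N → ℂ)).symm (e i)) := by
    rw [orthonormal_iff_ite]
    intro i j
    simpa [PiLp.inner_apply, RCLike.inner_apply, dotProduct, mul_comm] using he i j
  have hb := horth.sum_inner_products_le (s := Finset.univ) ((WithLp.equiv 2 (Fin N → ℂ)).symm v)
  have hnorm : ‖(WithLp.equiv 2 (Fin N → ℂ)).symm v‖ ^ 2 = ∑ a, ‖v a‖ ^ 2 := by
    rw [EuclideanSpace.norm_eq, Real.sq_sqrt (by positivity)]
    simp
  rw [hnorm] at hb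
  refine le_trans (le_of_eq ?_) hb
  refine Finset.sum_congr rfl fun i _ => ?_
  congr 1
  simp [PiLp.inner_apply, RCLike.inner_apply, dotProduct, mul_comm]

def tp {NA NB : ℕ} (u : Fin NA → ℂ) (v : Fin NB → ℂ) : Fin NA × Fin NB → ℂ :=
  fun x => u x.1 * v x.2

lemma kron_mulVec_tp {NA NB : ℕ} (S : Matrix (Fin NA) (Fin NA) ℂ)
    (T : Matrix (Fin NB) (Fin NB) ℂ) (u : Fin NA → ℂ) (v : Fin NB → ℂ) :
    (S ⊗ₖ T) *ᵥ tp u v = tp (S *ᵥ u) (T *ᵥ v) := by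
  funext x
  simp only [tp, mulVec, dotProduct, kroneckerMap_apply, Fintype.sum_prod_type, Finset.mul_sum,
    Finset.sum_mul]
  rw [Finset.sum_comm]
  refine Finset.sum_congr rfl fun c _ => Finset.sum_congr rfl fun d _ => by ring

lemma dot_tp {NA NB : ℕ} (u u' : Fin NA → ℂ) (v v' : Fin NB → ℂ) :
    star (tp u v) ⬝ᵥ tp u' v' = (star u ⬝ᵥ u') * (star v ⬝ᵥ v') := by
  simp only [tp, dotProduct, Fintype.sum_prod_type, Pi.star_apply, Finset.sum_mul_sum]
  refine Finset.sum_congr rfl fun a _ => Finset.sum_congr rfl fun b _ => ?_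
  simp only [star_mul', Pi.star_apply]
  ring

lemma dot_sum_right {α : Type*} [Fintype α] {n : ℕ} (v : α → ℂ) (w : Fin n → α → ℂ) :
    v ⬝ᵥ (∑ i, w i) = ∑ i, v ⬝ᵥ w i := by
  simp only [dotProduct, Finset.sum_apply, Finset.mul_sum]
  rw [Finset.sum_comm]

lemma sum_dot_left {α : Type*} [Fintype α] {n : ℕ} (v : α → ℂ) (w : Fin n → α → ℂ) :
    (∑ i, w i) ⬝ᵥ v = ∑ i, w i ⬝ᵥ v := by
  simp only [dotProduct, Finset.sum_apply, Finset.sum_mul]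
  rw [Finset.sum_comm]

lemma mulVec_sum' {α β : Type*} [Fintype α] [Fintype β] {n : ℕ}
    (M : Matrix β α ℂ) (w : Fin n → α → ℂ) :
    M *ᵥ (∑ i, w i) = ∑ i, M *ᵥ w i := by
  funext a
  simp only [mulVec, dot_sum_right, Finset.sum_apply]

lemma expand {NA NB n : ℕ} (c : Fin n → ℝ) (eA : Fin n → (Fin NA → ℂ))
    (eB : Fin n → (Fin NB → ℂ))
    (S : Matrix (Fin NA) (Fin NA) ℂ) (T : Matrix (Fin NB) (Fin NB) ℂ)
    (ψ : Fin NA × Fin NB → ℂ)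
    (hψ : ψ = fun x => ∑ i, (c i : ℂ) * eA i x.1 * eB i x.2) :
    star ψ ⬝ᵥ ((S ⊗ₖ T) *ᵥ ψ) =
      ∑ i, ∑ j, ((c i : ℂ) * (c j : ℂ)) * (star (eA i) ⬝ᵥ (S *ᵥ eA j)) *
        (star (eB i) ⬝ᵥ (T *ᵥ eB j)) := by
  have hψs : ψ = ∑ i, (c i : ℂ) • tp (eA i) (eB i) := by
    funext x
    simp only [hψ, Finset.sum_apply, Pi.smul_apply, tp, smul_eq_mul]
    exact Finset.sum_congr rfl fun i _ => by ring
  rw [hψs, mulVec_sum', star_sum, sum_dot_left]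
  refine Finset.sum_congr rfl fun i _ => ?_
  rw [dot_sum_right]
  refine Finset.sum_congr rfl fun j _ => ?_
  rw [mulVec_smul, star_smul, smul_dotProduct, dotProduct_smul, kron_mulVec_tp, dot_tp]
  simp [Complex.conj_ofReal]
  ring

/-- rank-one projector -/
def proj {N : ℕ} (u : Fin N → ℂ) : Matrix (Fin N) (Fin N) ℂ :=
  Matrix.of fun a b => u a * star (u b)

lemma proj_psd {N : ℕ} (u : Fin N → ℂ) : (proj u).PosSemidef := by
  have h : proj u = (Matrix.of fun (_ : Fin 1) b => star (u b))ᴴ *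
      (Matrix.of fun (_ : Fin 1) b => star (u b)) := by
    ext a b
    simp [proj, Matrix.mul_apply, Matrix.conjTranspose_apply]
  rw [h]
  exact posSemidef_conjTranspose_mul_self _

lemma proj_sq {N : ℕ} (u : Fin N → ℂ) (hu : star u ⬝ᵥ u = 1) :
    proj u * proj u = proj u := by
  ext a b
  simp only [Matrix.mul_apply, proj, Matrix.of_apply]
  have : ∀ k, (u a * star (u k)) * (u k * star (u b))
      = (u a * star (u b)) * (star (u k) * u k) := fun k => by ring
  rw [Finset.sum_congr rfl fun k _ => this k, ← Finset.mul_sum]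
  have : ∑ k, star (u k) * u k = 1 := by simpa [dotProduct] using hu
  rw [this, mul_one]

/-- explicit square root of a positive semidefinite matrix -/
noncomputable def msqrt {N : ℕ} {A : Matrix (Fin N) (Fin N) ℂ} (h : A.PosSemidef) :
    Matrix (Fin N) (Fin N) ℂ :=
  (h.1.eigenvectorUnitary : Matrix (Fin N) (Fin N) ℂ) *
    diagonal (fun i => ((Real.sqrt (h.1.eigenvalues i) : ℝ) : ℂ)) *
    (star h.1.eigenvectorUnitary : Matrix (Fin N) (Fin N) ℂ)

lemma M_mul {N : ℕ} (U : Matrix.unitaryGroup (Fin N) ℂ) (f g : Fin N → ℝ) :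
    ((U : Matrix (Fin N) (Fin N) ℂ) * diagonal (fun i => ((f i : ℝ) : ℂ)) *
      (star U : Matrix (Fin N) (Fin N) ℂ)) *
    ((U : Matrix (Fin N) (Fin N) ℂ) * diagonal (fun i => ((g i : ℝ) : ℂ)) *
      (star U : Matrix (Fin N) (Fin N) ℂ)) =
    (U : Matrix (Fin N) (Fin N) ℂ) * diagonal (fun i => ((f i * g i : ℝ) : ℂ)) *
      (star U : Matrix (Fin N) (Fin N) ℂ) := by
  have hU : (star U : Matrix (Fin N) (Fin N) ℂ) * (U : Matrix (Fin N) (Fin N) ℂ) = 1 :=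
    Unitary.coe_star_mul_self U
  calc _ = (U : Matrix (Fin N) (Fin N) ℂ) * (diagonal (fun i => ((f i : ℝ) : ℂ)) *
        ((star U : Matrix (Fin N) (Fin N) ℂ) * (U : Matrix (Fin N) (Fin N) ℂ)) *
        diagonal (fun i => ((g i : ℝ) : ℂ))) * (star U : Matrix (Fin N) (Fin N) ℂ) := by
        simp only [Matrix.mul_assoc]
    _ = _ := by rw [hU, Matrix.mul_one, diagonal_mul_diagonal]; simp

lemma unM {N : ℕ} (U : Matrix.unitaryGroup (Fin N) ℂ) (D : Matrix (Fin N) (Fin N) ℂ) :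
    (star U : Matrix (Fin N) (Fin N) ℂ) * ((U : Matrix (Fin N) (Fin N) ℂ) * D *
      (star U : Matrix (Fin N) (Fin N) ℂ)) * (U : Matrix (Fin N) (Fin N) ℂ) = D := by
  have hU : (star U : Matrix (Fin N) (Fin N) ℂ) * (U : Matrix (Fin N) (Fin N) ℂ) = 1 :=
    Unitary.coe_star_mul_self U
  calc _ = ((star U : Matrix (Fin N) (Fin N) ℂ) * (U : Matrix (Fin N) (Fin N) ℂ)) * D *
        ((star U : Matrix (Fin N) (Fin N) ℂ) * (U : Matrix (Fin N) (Fin N) ℂ)) := by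
        simp only [Matrix.mul_assoc]
    _ = D := by rw [hU, Matrix.one_mul, Matrix.mul_one]

lemma spec {N : ℕ} {A : Matrix (Fin N) (Fin N) ℂ} (h : A.IsHermitian) :
    A = (h.eigenvectorUnitary : Matrix (Fin N) (Fin N) ℂ) *
      diagonal (fun i => ((h.eigenvalues i : ℝ) : ℂ)) *
      (star h.eigenvectorUnitary : Matrix (Fin N) (Fin N) ℂ) := by
  conv_lhs => rw [h.spectral_theorem, Unitary.conjStarAlgAut_apply]
  rfl

lemma msqrt_mul_self {N : ℕ} {A : Matrix (Fin N) (Fin N) ℂ} (h : A.PosSemidef) :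
    msqrt h * msqrt h = A := by
  unfold msqrt
  rw [M_mul]
  convert (spec h.1).symm using 2
  have hf : (fun i => ((Real.sqrt (h.1.eigenvalues i) * Real.sqrt (h.1.eigenvalues i) : ℝ) : ℂ)) =
      fun i => ((h.1.eigenvalues i : ℝ) : ℂ) :=
    funext fun i => by rw [Real.mul_self_sqrt (h.eigenvalues_nonneg i)]
  rw [hf]

lemma msqrt_herm {N : ℕ} {A : Matrix (Fin N) (Fin N) ℂ} (h : A.PosSemidef) :
    (msqrt h).IsHermitian := by
  simp [msqrt, IsHermitian, conjTranspose_mul, Matrix.mul_assoc, diagonal_conjTranspose,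
    Matrix.star_eq_conjTranspose, Pi.star_def, Complex.star_def, Complex.conj_ofReal]

lemma msqrt_idem {N : ℕ} {A : Matrix (Fin N) (Fin N) ℂ} (h : A.PosSemidef) (hA : A * A = A) :
    msqrt h = A := by
  have hs := spec h.1
  have h2 := congrArg₂ (· * ·) hs hs
  rw [M_mul, hA] at h2
  have h3 := congrArg (fun X => (star h.1.eigenvectorUnitary : Matrix (Fin N) (Fin N) ℂ) * X *
    (h.1.eigenvectorUnitary : Matrix (Fin N) (Fin N) ℂ)) (hs.symm.trans h2)
  simp only [unM] at h3
  have key : ∀ i, Real.sqrt (h.1.eigenvalues i) = h.1.eigenvalues i := by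
    intro i
    have hi := congrFun (congrFun h3 i) i
    simp only [diagonal_apply_eq] at hi
    have hl : h.1.eigenvalues i = h.1.eigenvalues i * h.1.eigenvalues i := by exact_mod_cast hi
    calc Real.sqrt (h.1.eigenvalues i) = Real.sqrt (h.1.eigenvalues i * h.1.eigenvalues i) := by
          rw [← hl]
      _ = h.1.eigenvalues i := Real.sqrt_mul_self (h.eigenvalues_nonneg i)
  have hf : (fun i => ((Real.sqrt (h.1.eigenvalues i) : ℝ) : ℂ)) =
      fun i => ((h.1.eigenvalues i : ℝ) : ℂ) := funext fun i => by rw [key i]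
  unfold msqrt
  rw [hf]
  exact hs.symm

lemma proj_sqrt {N : ℕ} (u : Fin N → ℂ) (hu : star u ⬝ᵥ u = 1) :
    msqrt (proj_psd u) = proj u :=
  msqrt_idem (proj_psd u) (proj_sq u hu)

lemma proj_trace {N : ℕ} (u : Fin N → ℂ) (hu : star u ⬝ᵥ u = 1) :
    (proj u).trace = 1 := by
  simp only [Matrix.trace, Matrix.diag, proj, Matrix.of_apply]
  rw [← hu]
  simp [dotProduct, mul_comm]

lemma proj_dot {N : ℕ} (u v w : Fin N → ℂ) :
    star v ⬝ᵥ (proj u *ᵥ w) = (star v ⬝ᵥ u) * (star u ⬝ᵥ w) := by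
  calc star v ⬝ᵥ (proj u *ᵥ w)
      = ∑ a, ∑ b, (star (v a) * u a) * (star (u b) * w b) := by
        simp only [dotProduct, mulVec, proj, Matrix.of_apply, Pi.star_apply, Finset.mul_sum]
        exact Finset.sum_congr rfl fun a _ => Finset.sum_congr rfl fun b _ => by ring
    _ = (∑ a, star (v a) * u a) * (∑ b, star (u b) * w b) := by
        rw [Finset.sum_mul_sum]
    _ = (star v ⬝ᵥ u) * (star u ⬝ᵥ w) := by simp [dotProduct]

lemma norm_dot_swap {N : ℕ} (u v : Fin N → ℂ) :
    ‖star u ⬝ᵥ v‖ = ‖star v ⬝ᵥ u‖ := by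
  have : star u ⬝ᵥ v = star (star v ⬝ᵥ u) := by
    simp [dotProduct, star_sum, mul_comm]
  rw [this, norm_star]

lemma key_bound {N n : ℕ} (e : Fin n → Fin N → ℂ)
    (he : ∀ i j, star (e i) ⬝ᵥ e j = if i = j then 1 else 0)
    (S : Matrix (Fin N) (Fin N) ℂ) (hS : S.IsHermitian) :
    ∑ j, ∑ i, ‖star (e i) ⬝ᵥ (S *ᵥ e j)‖ ^ 2 ≤ ((S * S).trace).re := by
  have step1 : ∑ j, ∑ i, ‖star (e i) ⬝ᵥ (S *ᵥ e j)‖ ^ 2 ≤ ∑ j, ∑ c, ‖(S *ᵥ e j) c‖ ^ 2 :=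
    Finset.sum_le_sum fun j _ => bessel e he _
  have step2 : ∑ j : Fin n, ∑ c, ‖(S *ᵥ e j) c‖ ^ 2 ≤ ∑ c, ∑ d, ‖S c d‖ ^ 2 := by
    rw [Finset.sum_comm]
    refine Finset.sum_le_sum fun c _ => ?_
    have h1 : ∀ j, ‖(S *ᵥ e j) c‖ = ‖star (e j) ⬝ᵥ (fun d => star (S c d))‖ := by
      intro j
      rw [norm_dot_swap]
      congr 1
      simp [mulVec, dotProduct]
    calc ∑ j : Fin n, ‖(S *ᵥ e j) c‖ ^ 2
        = ∑ j : Fin n, ‖star (e j) ⬝ᵥ (fun d => star (S c d))‖ ^ 2 := by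
          exact Finset.sum_congr rfl fun j _ => by rw [h1 j]
      _ ≤ ∑ d, ‖star (S c d)‖ ^ 2 := bessel e he _
      _ = ∑ d, ‖S c d‖ ^ 2 := by simp
  have step3 : ∑ c, ∑ d, ‖S c d‖ ^ 2 = ((S * S).trace).re := by
    simp only [Matrix.trace, Matrix.diag, Matrix.mul_apply, Complex.re_sum]
    refine Finset.sum_congr rfl fun c _ => Finset.sum_congr rfl fun d _ => ?_
    have hcd : S d c = star (S c d) := by
      rw [← hS.apply c d]
      simp [Matrix.conjTranspose_apply]
    rw [hcd, show (star (S c d) : ℂ) = (starRingEnd ℂ) (S c d) from rfl, Complex.mul_conj,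
      Complex.ofReal_re, ← Complex.sq_norm]
  exact step3 ▸ le_trans step1 step2

end Stmt7Aux

open Stmt7Aux in
/-- For a pure state in Schmidt form, the Hellinger-distance correlation
measure `inf √(2 − 2 ⟨ψ|√δ_A ⊗ √δ_B|ψ⟩)` over density operators equals `√(2(1 − p₁))`. -/
theorem stmt_7 (n NA NB : ℕ) (hn : 0 < n)
    (p : Fin n → ℝ) (hnn : ∀ i, 0 ≤ p i) (hanti : Antitone p) (hsum : ∑ i, p i = 1)
    (eA : Fin n → (Fin NA → ℂ)) (eB : Fin n → (Fin NB → ℂ))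
    (hA : ∀ i j, star (eA i) ⬝ᵥ eA j = if i = j then 1 else 0)
    (hB : ∀ i j, star (eB i) ⬝ᵥ eB j = if i = j then 1 else 0)
    (ψ : Fin NA × Fin NB → ℂ)
    (hψ : ψ = fun x => ∑ i, (Real.sqrt (p i) : ℂ) * eA i x.1 * eB i x.2) :
    sInf {x : ℝ | ∃ (δA : Matrix (Fin NA) (Fin NA) ℂ) (δB : Matrix (Fin NB) (Fin NB) ℂ)
        (h1 : δA.PosSemidef) (h2 : δB.PosSemidef), δA.trace = 1 ∧ δB.trace = 1 ∧
        x = Real.sqrt (2 - 2 * (star ψ ⬝ᵥ ((((h1.1.eigenvectorUnitary : Matrix (Fin NA) (Fin NA) ℂ) *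
          diagonal (fun i => ((Real.sqrt (h1.1.eigenvalues i) : ℝ) : ℂ)) *
          (star h1.1.eigenvectorUnitary : Matrix (Fin NA) (Fin NA) ℂ)) ⊗ₖ
        ((h2.1.eigenvectorUnitary : Matrix (Fin NB) (Fin NB) ℂ) *
          diagonal (fun i => ((Real.sqrt (h2.1.eigenvalues i) : ℝ) : ℂ)) *
          (star h2.1.eigenvectorUnitary : Matrix (Fin NB) (Fin NB) ℂ))) *ᵥ ψ)).re)}
      = Real.sqrt (2 * (1 - p ⟨0, hn⟩)) := by
  set z : Fin n := ⟨0, hn⟩ with hz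
  set uA := eA z with huAdef
  set uB := eB z with huBdef
  have huA : star uA ⬝ᵥ uA = 1 := by simpa using hA z z
  have huB : star uB ⬝ᵥ uB = 1 := by simpa using hB z z
  set val := Real.sqrt (2 * (1 - p z)) with hval
  -- the value with the rank-one projectors
  have hdot : star ψ ⬝ᵥ ((msqrt (proj_psd uA) ⊗ₖ msqrt (proj_psd uB)) *ᵥ ψ) = ((p z : ℝ) : ℂ) := by
    rw [proj_sqrt uA huA, proj_sqrt uB huB,
      expand (fun i => Real.sqrt (p i)) eA eB _ _ ψ hψ]
    simp only [proj_dot, hA, hB]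
    rw [Fintype.sum_eq_single z (fun i hi => Finset.sum_eq_zero fun j _ => by simp [hi, huAdef, huBdef, hA, hB]),
      Fintype.sum_eq_single z (fun j hj => by simp [Ne.symm hj, huAdef, huBdef, hA, hB])]
    rw [← Complex.ofReal_mul, Real.mul_self_sqrt (hnn z)]
    simp [huAdef, huBdef, hA, hB]
  -- membership
  have hmem : val ∈ {x : ℝ | ∃ (δA : Matrix (Fin NA) (Fin NA) ℂ)
      (δB : Matrix (Fin NB) (Fin NB) ℂ)
      (h1 : δA.PosSemidef) (h2 : δB.PosSemidef), δA.trace = 1 ∧ δB.trace = 1 ∧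
      x = Real.sqrt (2 - 2 * (star ψ ⬝ᵥ ((msqrt h1 ⊗ₖ msqrt h2) *ᵥ ψ)).re)} := by
    refine ⟨proj uA, proj uB, proj_psd uA, proj_psd uB, proj_trace uA huA, proj_trace uB huB, ?_⟩
    rw [hdot, Complex.ofReal_re, hval]
    congr 1
    ring
  -- lower bound
  have hbound : ∀ x ∈ {x : ℝ | ∃ (δA : Matrix (Fin NA) (Fin NA) ℂ)
      (δB : Matrix (Fin NB) (Fin NB) ℂ)
      (h1 : δA.PosSemidef) (h2 : δB.PosSemidef), δA.trace = 1 ∧ δB.trace = 1 ∧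
      x = Real.sqrt (2 - 2 * (star ψ ⬝ᵥ ((msqrt h1 ⊗ₖ msqrt h2) *ᵥ ψ)).re)}, val ≤ x := by
    rintro x ⟨δA, δB, h1, h2, htA, htB, rfl⟩
    set S := msqrt h1 with hS
    set T := msqrt h2 with hT
    set a : Fin n → Fin n → ℂ := fun i j => star (eA i) ⬝ᵥ (S *ᵥ eA j) with ha
    set b : Fin n → Fin n → ℂ := fun i j => star (eB i) ⬝ᵥ (T *ᵥ eB j) with hb
    have hfa : ∑ q : Fin n × Fin n, ‖a q.1 q.2‖ ^ 2 ≤ 1 := by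
      rw [Fintype.sum_prod_type]
      calc ∑ i, ∑ j, ‖a i j‖ ^ 2 = ∑ j, ∑ i, ‖a i j‖ ^ 2 := Finset.sum_comm
        _ ≤ ((S * S).trace).re := key_bound eA hA S (msqrt_herm h1)
        _ = 1 := by rw [hS, msqrt_mul_self h1, htA, Complex.one_re]
    have hfb : ∑ q : Fin n × Fin n, ‖b q.1 q.2‖ ^ 2 ≤ 1 := by
      rw [Fintype.sum_prod_type]
      calc ∑ i, ∑ j, ‖b i j‖ ^ 2 = ∑ j, ∑ i, ‖b i j‖ ^ 2 := Finset.sum_comm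
        _ ≤ ((T * T).trace).re := key_bound eB hB T (msqrt_herm h2)
        _ = 1 := by rw [hT, msqrt_mul_self h2, htB, Complex.one_re]
    have hcs : ∑ q : Fin n × Fin n, ‖a q.1 q.2‖ * ‖b q.1 q.2‖ ≤ 1 := by
      have h := Finset.sum_mul_sq_le_sq_mul_sq Finset.univ
        (fun q : Fin n × Fin n => ‖a q.1 q.2‖) (fun q : Fin n × Fin n => ‖b q.1 q.2‖)
      have hnonneg : (0:ℝ) ≤ ∑ q : Fin n × Fin n, ‖a q.1 q.2‖ * ‖b q.1 q.2‖ :=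
        Finset.sum_nonneg fun q _ => mul_nonneg (norm_nonneg _) (norm_nonneg _)
      nlinarith [hfa, hfb, Finset.sum_nonneg
        (fun q (_ : q ∈ (Finset.univ : Finset (Fin n × Fin n))) => sq_nonneg ‖a q.1 q.2‖),
        Finset.sum_nonneg
        (fun q (_ : q ∈ (Finset.univ : Finset (Fin n × Fin n))) => sq_nonneg ‖b q.1 q.2‖)]
    have hre : (star ψ ⬝ᵥ ((S ⊗ₖ T) *ᵥ ψ)).re ≤ p z := by
      rw [expand (fun i => Real.sqrt (p i)) eA eB S T ψ hψ]
      rw [Complex.re_sum]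
      have hterm : ∀ i j, (((Real.sqrt (p i) : ℂ)) * (Real.sqrt (p j) : ℂ) * a i j * b i j).re
          ≤ p z * (‖a i j‖ * ‖b i j‖) := by
        intro i j
        have h0 : (((Real.sqrt (p i) : ℂ)) * (Real.sqrt (p j) : ℂ) * a i j * b i j).re
            ≤ ‖((Real.sqrt (p i) : ℂ)) * (Real.sqrt (p j) : ℂ) * a i j * b i j‖ := by
          have := Complex.re_le_norm (((Real.sqrt (p i) : ℂ)) * (Real.sqrt (p j) : ℂ)
            * a i j * b i j)
          exact this
        refine h0.trans ?_
        rw [norm_mul, norm_mul, norm_mul]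
        simp only [Complex.norm_real, Real.norm_eq_abs,
          abs_of_nonneg (Real.sqrt_nonneg _)]
        rw [mul_assoc]
        refine mul_le_mul_of_nonneg_right ?_ (mul_nonneg (norm_nonneg _) (norm_nonneg _))
        calc Real.sqrt (p i) * Real.sqrt (p j)
            ≤ Real.sqrt (p z) * Real.sqrt (p z) :=
              mul_le_mul (Real.sqrt_le_sqrt (hanti (by simp [hz, Fin.le_def])))
                (Real.sqrt_le_sqrt (hanti (by simp [hz, Fin.le_def])))
                (Real.sqrt_nonneg _) (Real.sqrt_nonneg _)
          _ = p z := Real.mul_self_sqrt (hnn z)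
      calc ∑ i, (∑ j, ((Real.sqrt (p i) : ℂ)) * (Real.sqrt (p j) : ℂ) * a i j * b i j).re
          = ∑ i, ∑ j, (((Real.sqrt (p i) : ℂ)) * (Real.sqrt (p j) : ℂ) * a i j * b i j).re := by
            exact Finset.sum_congr rfl fun i _ => Complex.re_sum _ _
        _ ≤ ∑ i, ∑ j, p z * (‖a i j‖ * ‖b i j‖) :=
            Finset.sum_le_sum fun i _ => Finset.sum_le_sum fun j _ => hterm i j
        _ = p z * ∑ q : Fin n × Fin n, ‖a q.1 q.2‖ * ‖b q.1 q.2‖ := by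
            rw [Fintype.sum_prod_type, Finset.mul_sum]
            exact Finset.sum_congr rfl fun i _ => by rw [Finset.mul_sum]
        _ ≤ p z * 1 := mul_le_mul_of_nonneg_left hcs (hnn z)
        _ = p z := mul_one _
    exact Real.sqrt_le_sqrt (by linarith)
  exact le_antisymm (csInf_le ⟨val, hbound⟩ hmem) (le_csInf ⟨val, hmem⟩ hbound)
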